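/- The n×n stable spline (TC) kernel matrix Q with entries Q_{ij} = α^{max(i,j)}, for 0 < α < 1, is symmetric positive definite. -/

import Mathlib

open Matrix

theorem stmt_9 (n : ℕ) (hn : 1 ≤ n) (α : ℝ) (hα0 : 0 < α) (hα1 : α < 1)
    (Q : Matrix (Fin n) (Fin n) ℝ)
    (hQ : ∀ i j, Q i j = α ^ (max i.1 j.1 + 1)) :
    Q.PosDef := by
  have hαinv : (1:ℝ) < α⁻¹ := (one_lt_inv₀ hα0).mpr hα1
  -- coefficients
  set c : ℕ → ℝ := fun k => if k = 0 then α⁻¹ else α⁻¹ ^ (k+1) - α⁻¹ ^ k with hc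
  have hcpos : ∀ k, 0 < c k := by
    intro k
    cases k with
    | zero => simpa [hc] using inv_pos.mpr hα0
    | succ m =>
      simp only [hc, Nat.succ_ne_zero, if_false]
      have : α⁻¹ ^ (m+1) < α⁻¹ ^ (m+1+1) :=
        pow_lt_pow_right₀ hαinv (by omega)
      linarith
  have hsum : ∀ m, ∑ k ∈ Finset.range (m+1), c k = α⁻¹ ^ (m+1) := by
    intro m
    induction m with
    | zero => simp [hc]
    | succ m ih =>
      rw [Finset.sum_range_succ, ih]
      simp only [hc, Nat.succ_ne_zero, if_false]
      ring
  -- the square-root factor matrix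
  set B : Matrix (Fin n) (Fin n) ℝ :=
    fun i k => if (k:ℕ) ≤ (i:ℕ) then α ^ ((i:ℕ)+1) * Real.sqrt (c k) else 0 with hB
  -- Q = B * Bᵀ
  have hfact : Q = B * Bᵀ := by
    ext i j
    rw [hQ]
    simp only [Matrix.mul_apply, Matrix.transpose_apply]
    simp only [hB]
    have key : ∀ k : Fin n,
        (if (k:ℕ) ≤ (i:ℕ) then α ^ ((i:ℕ)+1) * Real.sqrt (c k) else 0) *
        (if (k:ℕ) ≤ (j:ℕ) then α ^ ((j:ℕ)+1) * Real.sqrt (c k) else 0)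
        = if (k:ℕ) ≤ min (i:ℕ) (j:ℕ) then α ^ ((i:ℕ)+1) * α ^ ((j:ℕ)+1) * c k else 0 := by
      intro k
      by_cases h1 : (k:ℕ) ≤ (i:ℕ) <;> by_cases h2 : (k:ℕ) ≤ (j:ℕ)
      · rw [if_pos h1, if_pos h2, if_pos (le_min h1 h2)]
        have h := Real.mul_self_sqrt (hcpos (k:ℕ)).le
        linear_combination α ^ ((i:ℕ)+1) * α ^ ((j:ℕ)+1) * h
      · rw [if_pos h1, if_neg h2, if_neg (fun h => h2 (le_trans h (min_le_right _ _))), mul_zero]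
      · rw [if_neg h1, if_neg (fun h => h1 (le_trans h (min_le_left _ _))), zero_mul]
      · rw [if_neg h1, if_neg (fun h => h1 (le_trans h (min_le_left _ _))), zero_mul]
    simp_rw [key]
    rw [← Finset.sum_filter]
    have hmlt : min (i:ℕ) (j:ℕ) < n := lt_of_le_of_lt (min_le_left _ _) i.isLt
    have hfil : (Finset.univ.filter (fun k : Fin n => (k:ℕ) ≤ min (i:ℕ) (j:ℕ)))
        = Finset.map ⟨fun k : Fin (min (i:ℕ) (j:ℕ) + 1) => ⟨k, lt_of_lt_of_le k.isLt hmlt⟩,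
            by intro a b hab; simpa [Fin.ext_iff] using hab⟩ Finset.univ := by
      ext k
      simp only [Finset.mem_filter, Finset.mem_map, Finset.mem_univ, true_and,
        Function.Embedding.coeFn_mk]
      constructor
      · intro hk
        exact ⟨⟨(k:ℕ), by omega⟩, rfl⟩
      · rintro ⟨a, rfl⟩
        exact Nat.lt_succ_iff.mp a.isLt
    rw [hfil, Finset.sum_map]
    show α ^ (max (i:ℕ) (j:ℕ) + 1) = ∑ x : Fin (min (i:ℕ) (j:ℕ) + 1),
      α ^ ((i:ℕ)+1) * α ^ ((j:ℕ)+1) * c ((⟨x, lt_of_lt_of_le x.isLt hmlt⟩ : Fin n) : ℕ)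
    rw [← Finset.mul_sum]
    have : ∑ a : Fin (min (i:ℕ) (j:ℕ) + 1), c ((⟨a, lt_of_lt_of_le a.isLt hmlt⟩ : Fin n) : ℕ)
        = ∑ k ∈ Finset.range (min (i:ℕ) (j:ℕ) + 1), c k := by
      rw [Fin.sum_univ_eq_sum_range]
    rw [this, hsum]
    have hiden : (i:ℕ)+1 + ((j:ℕ)+1) = (min (i:ℕ) (j:ℕ) + 1) + (max (i:ℕ) (j:ℕ) + 1) := by
      rcases le_total (i:ℕ) (j:ℕ) with h | h <;> simp [min_eq_left, max_eq_right, *] <;> omega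
    have hane : α ≠ 0 := ne_of_gt hα0
    rw [inv_pow]
    field_simp
    rw [← pow_add, ← pow_add, hiden]
    ring
  -- B is lower triangular with positive diagonal, hence invertible
  have hdiag : ∀ i : Fin n, 0 < B i i := by
    intro i
    simp only [hB, le_refl, if_true]
    exact mul_pos (pow_pos hα0 _) (Real.sqrt_pos.mpr (hcpos _))
  have hdet : B.det ≠ 0 := by
    have htri : B.BlockTriangular OrderDual.toDual := by
      intro i j hij
      have : (i:ℕ) < (j:ℕ) := hij
      simp only [hB]
      rw [if_neg (by omega)]
    rw [Matrix.det_of_lowerTriangular B htri]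
    exact Finset.prod_ne_zero_iff.mpr fun i _ => (hdiag i).ne'
  have hunit : IsUnit Bᵀ := by
    rw [Matrix.isUnit_iff_isUnit_det, Matrix.det_transpose]
    exact hdet.isUnit
  have hinj : Function.Injective (Bᵀ).mulVec := Matrix.mulVec_injective_iff_isUnit.mpr hunit
  refine Matrix.PosDef.of_dotProduct_mulVec_pos ?_ ?_
  · -- Hermitian
    rw [Matrix.IsHermitian, hfact]
    simp [Matrix.conjTranspose, Matrix.transpose_mul, Matrix.map_mul]
    ext i j
    simp [Matrix.mul_apply, mul_comm]
  · intro x hx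
    rw [hfact]
    have : x ⬝ᵥ ((B * Bᵀ).mulVec x) = (Bᵀ.mulVec x) ⬝ᵥ (Bᵀ.mulVec x) := by
      rw [← Matrix.mulVec_mulVec, Matrix.dotProduct_mulVec]
      congr 1
      ext k
      simp [Matrix.vecMul, Matrix.mulVec, dotProduct, Matrix.transpose_apply, mul_comm]
    have hy : Bᵀ.mulVec x ≠ 0 := by
      intro h
      apply hx
      apply hinj
      rw [h, Matrix.mulVec_zero]
    simp only [star_trivial]
    rw [this]
    have hnn : 0 ≤ (Bᵀ.mulVec x) ⬝ᵥ (Bᵀ.mulVec x) :=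
      Finset.sum_nonneg fun i _ => mul_self_nonneg _
    exact lt_of_le_of_ne hnn fun h => hy (dotProduct_self_eq_zero.mp h.symm)
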